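/- Let X ⊆ ℝ² bounded, Y = (0,1), c ∈ C² with ∇_x(∂c/∂y) nowhere vanishing, μ, ν absolutely continuous probability measures. Then for each y ∈ Y there exists x ∈ X̄ such that y splits the mass at every x̄ ∈ L_x(y), i.e. μ({x' : ∂c/∂y(x,y) < ∂c/∂y(x',y)}) = ν([0,y)). -/

import Mathlib

open Set MeasureTheory Filter Topology

lemma aux_countable_of_isolated {s : Set ℝ}
    (h : ∀ b ∈ s, ∀ᶠ b' in 𝓝[≠] b, b' ∉ s) : s.Countable := by
  have hd : DiscreteTopology s := by
    rw [discreteTopology_subtype_iff]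
    intro x hx
    rw [inf_principal_eq_bot]
    exact h x hx
  exact (HereditarilyLindelof_LindelofSets s).countable hd

lemma aux_null_of_countable_fibers₂ {A : Set (ℝ × ℝ)} (hA : MeasurableSet A)
    (h : ∀ a : ℝ, {b | (a, b) ∈ A}.Countable) : volume A = 0 := by
  rw [Measure.volume_eq_prod, Measure.prod_apply hA]
  have : ∀ a : ℝ, volume (Prod.mk a ⁻¹' A) = 0 := fun a => (h a).measure_zero _
  simp [this]

lemma aux_null_of_countable_fibers₁ {A : Set (ℝ × ℝ)} (hA : MeasurableSet A)
    (h : ∀ b : ℝ, {a | (a, b) ∈ A}.Countable) : volume A = 0 := by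
  rw [Measure.volume_eq_prod, Measure.prod_apply_symm hA]
  have : ∀ b : ℝ, volume ((fun a => (a, b)) ⁻¹' A) = 0 := fun b => (h b).measure_zero _
  simp [this]

lemma aux_level_set_null {F : ℝ × ℝ → ℝ} (hF : ContDiff ℝ 1 F) {K : Set (ℝ × ℝ)}
    (hK : IsClosed K) (hgrad : ∀ x ∈ K, fderiv ℝ F x ≠ 0) (t : ℝ) :
    volume {x | x ∈ K ∧ F x = t} = 0 := by
  have hFc : Continuous F := hF.continuous
  have hfd : Continuous (fderiv ℝ F) := hF.continuous_fderiv one_ne_zero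
  have hdiff : Differentiable ℝ F := hF.differentiable one_ne_zero
  set A₁ : Set (ℝ × ℝ) := {x | x ∈ K ∧ F x = t ∧ fderiv ℝ F x (1, 0) ≠ 0} with hA₁def
  set A₂ : Set (ℝ × ℝ) := {x | x ∈ K ∧ F x = t ∧ fderiv ℝ F x (0, 1) ≠ 0} with hA₂def
  have hc1 : Continuous fun x : ℝ × ℝ => fderiv ℝ F x (1, 0) := hfd.clm_apply continuous_const
  have hc2 : Continuous fun x : ℝ × ℝ => fderiv ℝ F x (0, 1) := hfd.clm_apply continuous_const
  have hmA₁ : MeasurableSet A₁ := by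
    exact (hK.measurableSet.inter ((hFc.measurable (measurableSet_singleton t)).inter
      ((hc1.measurable (measurableSet_singleton 0)).compl)))
  have hmA₂ : MeasurableSet A₂ := by
    exact (hK.measurableSet.inter ((hFc.measurable (measurableSet_singleton t)).inter
      ((hc2.measurable (measurableSet_singleton 0)).compl)))
  have hcover : {x | x ∈ K ∧ F x = t} ⊆ A₁ ∪ A₂ := by
    rintro x ⟨hxK, hxt⟩
    by_contra hx
    simp only [mem_union, hA₁def, hA₂def, mem_setOf_eq, not_or, not_and, not_not] at hx
    apply hgrad x hxK
    have h1 : fderiv ℝ F x (1, 0) = 0 := hx.1 hxK hxt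
    have h2 : fderiv ℝ F x (0, 1) = 0 := hx.2 hxK hxt
    refine ContinuousLinearMap.ext fun v => ?_
    have hv : v = v.1 • ((1:ℝ), (0:ℝ)) + v.2 • ((0:ℝ), (1:ℝ)) := by
      apply Prod.ext <;> simp
    have hz : (fderiv ℝ F x) (v.1 • ((1:ℝ),(0:ℝ)) + v.2 • ((0:ℝ),(1:ℝ))) = 0 := by
      rw [map_add, ContinuousLinearMap.map_smul, ContinuousLinearMap.map_smul, h1, h2, smul_zero, smul_zero, add_zero]
    rwa [← hv] at hz
  have hA₂null : volume A₂ = 0 := by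
    apply aux_null_of_countable_fibers₂ hmA₂
    intro a
    apply aux_countable_of_isolated
    rintro b ⟨hbK, hbt, hbd⟩
    have hder : HasDerivAt (fun b' => F (a, b')) (fderiv ℝ F (a, b) (0, 1)) b :=
      (hdiff (a, b)).hasFDerivAt.comp_hasDerivAt b ((hasDerivAt_const b a).prodMk (hasDerivAt_id b))
    filter_upwards [hder.eventually_ne hbd] with b' hb'
    rintro ⟨_, hb't, _⟩
    exact hb' (hb't.trans hbt.symm)
  have hA₁null : volume A₁ = 0 := by
    apply aux_null_of_countable_fibers₁ hmA₁
    intro b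
    apply aux_countable_of_isolated
    rintro a ⟨haK, hat, had⟩
    have hder : HasDerivAt (fun a' => F (a', b)) (fderiv ℝ F (a, b) (1, 0)) a :=
      (hdiff (a, b)).hasFDerivAt.comp_hasDerivAt a ((hasDerivAt_id a).prodMk (hasDerivAt_const a b))
    filter_upwards [hder.eventually_ne had] with a' ha'
    rintro ⟨_, ha't, _⟩
    exact ha' (ha't.trans hat.symm)
  exact measure_mono_null hcover (measure_union_null hA₁null hA₂null)


/-- Lemma 4.5: for each `y ∈ Y = (0,1)` there is `x ∈ X̄` such that `y`
splits the mass at `x̄` precisely for those `x̄ ∈ L_x(y)`, i.e.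
`μ({x' : ∂c/∂y(x,y) < ∂c/∂y(x',y)}) = ν([0,y))`. -/
theorem mass_splitting_exists_in_y
    (X : Set (ℝ × ℝ)) (hXo : IsOpen X) (hXb : Bornology.IsBounded X)
    (c : (ℝ × ℝ) → ℝ → ℝ) (hc : ContDiff ℝ 2 (Function.uncurry c))
    (cy : (ℝ × ℝ) → ℝ → ℝ) (hcy : ∀ x y, cy x y = deriv (c x) y)
    (hgrad : ∀ x ∈ closure X, ∀ y ∈ Icc (0:ℝ) 1, fderiv ℝ (fun x' => cy x' y) x ≠ 0)
    (μ : Measure (ℝ × ℝ)) (ν : Measure ℝ)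
    [IsProbabilityMeasure μ] [IsProbabilityMeasure ν]
    (hμac : μ ≪ volume) (hνac : ν ≪ volume)
    (hμX : μ X = 1) (hνY : ν (Ioo (0:ℝ) 1) = 1) :
    ∀ y ∈ Ioo (0:ℝ) 1, ∃ x ∈ closure X,
      ∀ xb ∈ closure X, cy xb y = cy x y →
        μ {x' : ℝ × ℝ | cy xb y < cy x' y} = ν (Ico 0 y) := by
  intro y hy
  have hcdiff : Differentiable ℝ (Function.uncurry c) := hc.differentiable two_ne_zero
  set F : ℝ × ℝ → ℝ := fun x => fderiv ℝ (Function.uncurry c) (x, y) (0, 1) with hFdef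
  -- `cy · y = F`
  have hFeq : ∀ x, cy x y = F x := by
    intro x
    have h1 : HasDerivAt (c x) (fderiv ℝ (Function.uncurry c) (x, y) ((0 : ℝ × ℝ), (1:ℝ))) y :=
      (hcdiff (x, y)).hasFDerivAt.comp_hasDerivAt y
        ((hasDerivAt_const y x).prodMk (hasDerivAt_id y))
    rw [hcy, h1.deriv]
  have hFfun : (fun x' => cy x' y) = F := funext hFeq
  -- `F` is C¹
  have hF1 : ContDiff ℝ 1 F := by
    have h0 : ContDiff ℝ 1 (fderiv ℝ (Function.uncurry c)) :=
      hc.fderiv_right (le_of_eq (by norm_num))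
    have h2 : ContDiff ℝ 1 (fun x : ℝ × ℝ => fderiv ℝ (Function.uncurry c) (x, y)) :=
      h0.comp (contDiff_id.prodMk contDiff_const)
    exact h2.clm_apply contDiff_const
  have hFc : Continuous F := hF1.continuous
  have hFgrad : ∀ x ∈ closure X, fderiv ℝ F x ≠ 0 := by
    intro x hx
    have := hgrad x hx y ⟨hy.1.le, hy.2.le⟩
    rwa [hFfun] at this
  -- basic measure facts
  have hXcnull : μ Xᶜ = 0 := by
    have h := measure_compl hXo.measurableSet (measure_ne_top μ X)
    rw [hμX, measure_univ, tsub_self] at h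
    exact h
  have hrestr : ∀ A : Set (ℝ × ℝ), A ⊆ (A ∩ X) ∪ Xᶜ := by
    intro A x hx
    by_cases h : x ∈ X
    · exact Or.inl ⟨hx, h⟩
    · exact Or.inr h
  have hnull : ∀ t : ℝ, μ {x' | F x' = t} = 0 := by
    intro t
    have hvol : volume {x | x ∈ closure X ∧ F x = t} = 0 :=
      aux_level_set_null hF1 isClosed_closure hFgrad t
    have hμlev : μ {x | x ∈ closure X ∧ F x = t} = 0 := hμac hvol
    refine le_antisymm ?_ zero_le
    calc μ {x' | F x' = t} ≤ μ (({x' | F x' = t} ∩ X) ∪ Xᶜ) :=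
          measure_mono (hrestr _)
      _ ≤ μ ({x' | F x' = t} ∩ X) + μ Xᶜ := measure_union_le _ _
      _ ≤ μ {x | x ∈ closure X ∧ F x = t} + 0 := by
          rw [hXcnull]
          gcongr
          rintro x ⟨hxt, hxX⟩
          exact ⟨subset_closure hxX, hxt⟩
      _ = 0 := by rw [hμlev, add_zero]
  -- the splitting function
  set g : ℝ → ENNReal := fun t => μ {x' | t < F x'} with hgdef
  have hganti : Antitone g := by
    intro s t hst
    exact measure_mono fun x hx => lt_of_le_of_lt hst hx
  have hge : ∀ t : ℝ, μ {x' | t ≤ F x'} = g t := by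
    intro t
    refine le_antisymm ?_ (measure_mono fun x hx => (le_of_lt (hx : t < F x) : t ≤ F x))
    calc μ {x' | t ≤ F x'} ≤ μ ({x' | t < F x'} ∪ {x' | F x' = t}) := by
          apply measure_mono
          intro x hx
          have hx' : t ≤ F x := hx
          simp only [mem_union, mem_setOf_eq]
          rcases hx'.lt_or_eq with h | h
          · exact Or.inl h
          · exact Or.inr h.symm
      _ ≤ μ {x' | t < F x'} + μ {x' | F x' = t} := measure_union_le _ _
      _ = g t := by rw [hnull, add_zero]
  -- the compact set of values
  have hXclcomp : IsCompact (closure X) := hXb.isCompact_closure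
  have hXne : X.Nonempty := by
    rcases Set.eq_empty_or_nonempty X with h | h
    · rw [h, measure_empty] at hμX; exact absurd hμX one_ne_zero.symm
    · exact h
  set K : Set ℝ := F '' closure X with hKdef
  have hKcomp : IsCompact K := hXclcomp.image hFc
  have hKne : K.Nonempty := (hXne.closure).image F
  obtain ⟨m, hmK, hmmin⟩ := hKcomp.exists_isLeast hKne
  set target : ENNReal := ν (Ico 0 y) with htgt
  have htarget1 : target ≤ 1 := by
    rw [← measure_univ (μ := ν)]
    exact measure_mono (subset_univ _)
  set S : Set ℝ := {t | t ∈ K ∧ target ≤ g t} with hSdef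
  have hmS : m ∈ S := by
    refine ⟨hmK, ?_⟩
    have hXsub : X ⊆ {x' | m ≤ F x'} := fun x hx => hmmin ⟨x, subset_closure hx, rfl⟩
    calc target ≤ 1 := htarget1
      _ = μ X := hμX.symm
      _ ≤ μ {x' | m ≤ F x'} := measure_mono hXsub
      _ = g m := hge m
  have hSne : S.Nonempty := ⟨m, hmS⟩
  have hSbdd : BddAbove S := hKcomp.bddAbove.mono fun t ht => ht.1
  set t₀ : ℝ := sSup S with ht₀def
  have ht₀K : t₀ ∈ K := by
    have h1 : t₀ ∈ closure S := csSup_mem_closure hSne hSbdd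
    have h2 : closure S ⊆ K := by
      rw [← hKcomp.isClosed.closure_eq]
      exact closure_mono fun t ht => ht.1
    exact h2 h1
  -- target ≤ g t₀
  have hlow : target ≤ g t₀ := by
    have hlt : ∀ t : ℝ, t < t₀ → target ≤ g t := by
      intro t ht
      obtain ⟨s, hsS, hts⟩ := exists_lt_of_lt_csSup hSne ht
      exact le_trans hsS.2 (hganti hts.le)
    have hseq : {x' | t₀ ≤ F x'} = ⋂ n : ℕ, {x' | t₀ - 1/(n+1) < F x'} := by
      ext x
      simp only [mem_iInter, mem_setOf_eq]
      constructor
      · intro hx n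
        have : (0:ℝ) < 1/(n+1) := by positivity
        linarith
      · intro hx
        by_contra hcon
        push_neg at hcon
        obtain ⟨n, hn⟩ := exists_nat_one_div_lt (sub_pos.mpr hcon)
        have := hx n
        linarith
    have hanti : Antitone fun n : ℕ => {x' | t₀ - 1/(n+1) < F x'} := by
      intro a b hab x hx
      simp only [mem_setOf_eq] at hx ⊢
      have hcast : ((a:ℝ)) ≤ (b:ℝ) := Nat.cast_le.mpr hab
      have h1 : 1/((b:ℝ)+1) ≤ 1/((a:ℝ)+1) := by
        apply one_div_le_one_div_of_le
        · positivity
        · linarith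
      linarith
    have hmeas : ∀ n : ℕ, NullMeasurableSet {x' | t₀ - 1/((n:ℝ)+1) < F x'} μ :=
      fun n => ((isOpen_Ioi.preimage hFc).measurableSet).nullMeasurableSet
    have hIm := hanti.measure_iInter (μ := μ) hmeas ⟨0, measure_ne_top μ _⟩
    have : target ≤ μ (⋂ n : ℕ, {x' | t₀ - 1/(n+1) < F x'}) := by
      rw [hIm]
      refine le_iInf fun n => ?_
      apply hlt
      have : (0:ℝ) < 1/((n:ℝ)+1) := by positivity
      linarith
    rw [← hseq] at this
    rw [hge t₀] at this
    exact this
  -- g t₀ ≤ target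
  have hhigh : g t₀ ≤ target := by
    by_contra hcon
    push_neg at hcon
    set B : Set ℝ := {t | t ∈ K ∧ t₀ < t} with hBdef
    rcases Set.eq_empty_or_nonempty B with hB | hB
    · -- no values above t₀ : g t₀ = 0
      have hzero : g t₀ = 0 := by
        refine le_antisymm ?_ zero_le
        calc μ {x' | t₀ < F x'} ≤ μ (({x' | t₀ < F x'} ∩ X) ∪ Xᶜ) := measure_mono (hrestr _)
          _ ≤ μ ({x' | t₀ < F x'} ∩ X) + μ Xᶜ := measure_union_le _ _
          _ = 0 := by
              rw [hXcnull, add_zero]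
              convert measure_empty (μ := μ)
              rw [Set.eq_empty_iff_forall_notMem]
              rintro x ⟨hxt, hxX⟩
              have : F x ∈ B := ⟨⟨x, subset_closure hxX, rfl⟩, hxt⟩
              rw [hB] at this
              exact this
      rw [hzero] at hcon
      exact (show (0:ENNReal) ≤ target from zero_le).not_gt hcon
    · have hBbdd : BddBelow B := ⟨t₀, fun t ht => ht.2.le⟩
      set b : ℝ := sInf B with hbdef
      have hbK : b ∈ K := by
        have h1 : b ∈ closure B := csInf_mem_closure hB hBbdd
        have h2 : closure B ⊆ K := by
          rw [← hKcomp.isClosed.closure_eq]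
          exact closure_mono fun t ht => ht.1
        exact h2 h1
      have hbge : t₀ ≤ b := le_csInf hB fun t ht => ht.2.le
      rcases eq_or_lt_of_le hbge with hbe | hblt
      · -- b = t₀ : right continuity contradiction
        have hseq : {x' | t₀ < F x'} = ⋃ n : ℕ, {x' | t₀ + 1/(n+1) < F x'} := by
          ext x
          simp only [mem_iUnion, mem_setOf_eq]
          constructor
          · intro hx
            obtain ⟨n, hn⟩ := exists_nat_one_div_lt (sub_pos.mpr hx)
            exact ⟨n, by linarith⟩
          · rintro ⟨n, hn⟩
            have : (0:ℝ) < 1/((n:ℝ)+1) := by positivity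
            linarith
        have hmono : Monotone fun n : ℕ => {x' | t₀ + 1/(n+1) < F x'} := by
          intro a b hab x hx
          simp only [mem_setOf_eq] at hx ⊢
          have hcast : ((a:ℝ)) ≤ (b:ℝ) := Nat.cast_le.mpr hab
          have h1 : 1/((b:ℝ)+1) ≤ 1/((a:ℝ)+1) := by
            apply one_div_le_one_div_of_le
            · positivity
            · linarith
          linarith
        have hUm := hmono.measure_iUnion (μ := μ)
        rw [← hseq] at hUm
        have : target < ⨆ n : ℕ, μ {x' | t₀ + 1/(n+1) < F x'} := by
          rw [← hUm]; exact hcon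
        obtain ⟨n, hn⟩ := lt_iSup_iff.mp this
        -- find a point of K in (t₀, t₀ + 1/(n+1))
        have : b < t₀ + 1/(n+1) := by
          rw [← hbe]
          have : (0:ℝ) < 1/((n:ℝ)+1) := by positivity
          linarith
        obtain ⟨u, huB, hu⟩ := exists_lt_of_csInf_lt hB this
        have huS : u ∈ S := ⟨huB.1, le_trans (le_of_lt hn) (hganti hu.le)⟩
        have : u ≤ t₀ := le_csSup hSbdd huS
        exact absurd huB.2 (not_lt.mpr this)
      · -- t₀ < b : gap argument
        have hgap : ∀ x ∈ X, t₀ < F x → b ≤ F x := by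
          intro x hx hxt
          exact csInf_le hBbdd ⟨⟨x, subset_closure hx, rfl⟩, hxt⟩
        have hgb : target < μ {x' | b ≤ F x'} := by
          refine lt_of_lt_of_le hcon ?_
          calc μ {x' | t₀ < F x'} ≤ μ (({x' | t₀ < F x'} ∩ X) ∪ Xᶜ) := measure_mono (hrestr _)
            _ ≤ μ ({x' | t₀ < F x'} ∩ X) + μ Xᶜ := measure_union_le _ _
            _ = μ ({x' | t₀ < F x'} ∩ X) := by rw [hXcnull, add_zero]
            _ ≤ μ {x' | b ≤ F x'} := by
                apply measure_mono
                rintro x ⟨hxt, hxX⟩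
                exact hgap x hxX hxt
        have hbS : b ∈ S := by
          refine ⟨hbK, ?_⟩
          exact le_trans hgb.le (hge b).le
        have : b ≤ t₀ := le_csSup hSbdd hbS
        exact absurd hblt (not_lt.mpr this)
  have hgt₀ : g t₀ = target := le_antisymm hhigh hlow
  -- conclude
  obtain ⟨x, hxcl, hxF⟩ := ht₀K
  refine ⟨x, hxcl, ?_⟩
  intro xb hxb hcyeq
  have hset : {x' : ℝ × ℝ | cy xb y < cy x' y} = {x' | t₀ < F x'} := by
    ext x'
    simp only [mem_setOf_eq, hFeq x', hcyeq, hFeq x, hxF]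
  rw [hset]
  exact hgt₀
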